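/- arXiv:2308.09846 — 2 statements merged into one kernel-verified Lean document; each statement's English description precedes it below -/
import Mathlib

section
/- Let L, S ∈ ℕ and let A be a nonempty subset of 2^{-LS}ℤ^d ∩ [0,1)^d. Then there exists an (L,S)-uniform subset A' ⊆ A with |A'| ≥ (2Ld)^{-S} |A|. -/
open Set Metric Pointwise

noncomputable section

/-- The half-open dyadic cube of side `2^{-k}` indexed by `j ∈ ℤ^d`. -/
def dyadicCube (d k : ℕ) (j : Fin d → ℤ) : Set (EuclideanSpace ℝ (Fin d)) :=
  {x | ∀ i, (j i : ℝ) ≤ 2 ^ k * x i ∧ 2 ^ k * x i < j i + 1}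

/-- Indices of dyadic cubes of side `2^{-k}` meeting `A`. -/
def covIdx (d k : ℕ) (A : Set (EuclideanSpace ℝ (Fin d))) : Set (Fin d → ℤ) :=
  {j | (A ∩ dyadicCube d k j).Nonempty}

/-- The dyadic covering number `|A|_{2^{-k}}`. -/
def covNum (d k : ℕ) (A : Set (EuclideanSpace ℝ (Fin d))) : ℕ :=
  (covIdx d k A).ncard

/-- The unit cube `[0,1)^d`. -/
def unitCube (d : ℕ) : Set (EuclideanSpace ℝ (Fin d)) := {x | ∀ i, 0 ≤ x i ∧ x i < 1}

/-- A `2^{-m}`-set : a subset of `2^{-m}ℤ^d ∩ [0,1)^d`. -/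
def IsDyadicSet (d m : ℕ) (A : Set (EuclideanSpace ℝ (Fin d))) : Prop :=
  A ⊆ unitCube d ∧ ∀ x ∈ A, ∀ i, ∃ n : ℤ, x i = n / 2 ^ m

/-- `(L,S)`-uniformity with branching numbers `R s`. -/
def IsUniform (d L S : ℕ) (R : ℕ → ℕ) (A : Set (EuclideanSpace ℝ (Fin d))) : Prop :=
  ∀ s < S, ∀ j ∈ covIdx d (s * L) A,
    covNum d ((s + 1) * L) (A ∩ dyadicCube d (s * L) j) = R s

/-- The homothety mapping the dyadic cube of level `k` with index `j` onto `[0,1)^d`. -/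
def renorm (d k : ℕ) (j : Fin d → ℤ) (y : EuclideanSpace ℝ (Fin d)) :
    EuclideanSpace ℝ (Fin d) := WithLp.toLp 2 (fun i => 2 ^ k * y i - j i)

/-- The `2^{-L}`-set associated to a set `B ⊆ [0,1)^d`: representatives `j/2^L` of
dyadic cubes of side `2^{-L}` meeting `B`. -/
def discretize (d L : ℕ) (B : Set (EuclideanSpace ℝ (Fin d))) :
    Set (EuclideanSpace ℝ (Fin d)) :=
  {x | ∃ j ∈ covIdx d L B, x = fun i => (j i : ℝ) / 2 ^ L}

/-! ### Auxiliary machinery -/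

/-- The index of the unique level-`k` dyadic cube containing `x`. -/
def uidx (d k : ℕ) (x : EuclideanSpace ℝ (Fin d)) : Fin d → ℤ := fun i => ⌊(2:ℝ)^k * x i⌋

lemma mem_dyadicCube_iff {d k : ℕ} {j : Fin d → ℤ} {x : EuclideanSpace ℝ (Fin d)} :
    x ∈ dyadicCube d k j ↔ uidx d k x = j := by
  simp only [dyadicCube, mem_setOf_eq, uidx]
  constructor
  · intro h; funext i
    exact Int.floor_eq_iff.mpr ⟨(h i).1, by exact_mod_cast (h i).2⟩
  · rintro rfl i
    refine ⟨Int.floor_le _, ?_⟩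
    push_cast
    exact Int.lt_floor_add_one _

lemma covIdx_eq_image (d k : ℕ) (B : Set (EuclideanSpace ℝ (Fin d))) :
    covIdx d k B = uidx d k '' B := by
  ext j
  simp only [covIdx, mem_setOf_eq, Set.Nonempty, mem_inter_iff, mem_dyadicCube_iff, mem_image]

lemma inter_cube (d k : ℕ) (j : Fin d → ℤ) (B : Set (EuclideanSpace ℝ (Fin d))) :
    B ∩ dyadicCube d k j = {x ∈ B | uidx d k x = j} := by
  ext x; simp [mem_dyadicCube_iff]

lemma floor_div_nat_int (a : ℝ) (n : ℕ) (hn : 0 < n) : ⌊a / (n : ℝ)⌋ = ⌊a⌋ / (n : ℤ) := by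
  have hn' : (0:ℝ) < n := Nat.cast_pos.mpr hn
  have hnz : (0:ℤ) < n := by exact_mod_cast hn
  rw [Int.floor_eq_iff]
  constructor
  · rw [le_div_iff₀ hn']
    calc ((⌊a⌋ / (n:ℤ) : ℤ) : ℝ) * n = ((⌊a⌋ / (n:ℤ) * n : ℤ) : ℝ) := by push_cast; ring
    _ ≤ (⌊a⌋ : ℝ) := by exact_mod_cast Int.ediv_mul_le ⌊a⌋ hnz.ne'
    _ ≤ a := Int.floor_le a
  · rw [div_lt_iff₀ hn']
    have h3 : ⌊a⌋ + 1 ≤ (⌊a⌋ / (n:ℤ) + 1) * n := Int.lt_ediv_add_one_mul_self ⌊a⌋ hnz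
    calc a < ⌊a⌋ + 1 := Int.lt_floor_add_one a
    _ ≤ _ := by exact_mod_cast h3

lemma uidx_uidx {d k k' : ℕ} (h : k ≤ k') (x : EuclideanSpace ℝ (Fin d)) :
    uidx d k x = fun i => uidx d k' x i / (2:ℤ)^(k'-k) := by
  funext i
  simp only [uidx]
  have h2 : (2:ℝ)^k * x i = ((2:ℝ)^k' * x i) / ((2^(k'-k) : ℕ) : ℝ) := by
    rw [eq_div_iff (by positivity)]
    push_cast
    rw [mul_right_comm, ← pow_add]
    congr 2
    omega
  rw [h2, floor_div_nat_int _ _ (by positivity)]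
  norm_cast

lemma top_select {ι : Type*} [DecidableEq ι] (w : ι → ℕ) :
    ∀ (n : ℕ) (C : Finset ι), C.card = n → ∀ m ≤ n,
      ∃ K ⊆ C, K.card = m ∧ m * ∑ i ∈ C, w i ≤ n * ∑ i ∈ K, w i := by
  intro n
  induction n with
  | zero =>
    intro C hC m hm
    exact ⟨∅, Finset.empty_subset _, by simp [Finset.card_empty]; omega,
      by simp [Nat.le_zero.mp hm]⟩
  | succ n ih =>
    intro C hC m hm
    rcases eq_or_lt_of_le hm with h | h
    · exact ⟨C, le_refl _, by omega, by rw [h]⟩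
    have hm' : m ≤ n := by omega
    have hCne : C.Nonempty := Finset.card_pos.mp (by omega)
    obtain ⟨a, ha, hamin⟩ := C.exists_min_image w hCne
    have hC' : (C.erase a).card = n := by rw [Finset.card_erase_of_mem ha, hC]; omega
    obtain ⟨K, hKC, hKcard, hKsum⟩ := ih (C.erase a) hC' m hm'
    refine ⟨K, hKC.trans (Finset.erase_subset _ _), hKcard, ?_⟩
    rcases Nat.eq_zero_or_pos m with rfl | hmpos
    · simp
    have hnpos : 0 < n := lt_of_lt_of_le hmpos hm'
    set X := ∑ i ∈ C, w i with hX
    set Y := ∑ i ∈ C.erase a, w i with hY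
    have hXY : Y + w a = X := Finset.sum_erase_add C w ha
    have hmin : (n+1) * w a ≤ X := by
      calc (n+1) * w a = ∑ _i ∈ C, w a := by rw [Finset.sum_const, hC]; ring
      _ ≤ X := Finset.sum_le_sum (fun i hi => hamin i hi)
    have key1 : n * X ≤ (n+1) * Y := by nlinarith
    have hfin : n * (m * X) ≤ n * ((n+1) * ∑ i ∈ K, w i) := by
      calc n * (m * X) = m * (n * X) := by ring
      _ ≤ m * ((n+1) * Y) := Nat.mul_le_mul_left m key1
      _ = (n+1) * (m * Y) := by ring
      _ ≤ (n+1) * (n * ∑ i ∈ K, w i) := Nat.mul_le_mul_left _ hKsum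
      _ = n * ((n+1) * ∑ i ∈ K, w i) := by ring
    exact Nat.le_of_mul_le_mul_left hfin hnpos

lemma step_lemma (d L s : ℕ) (hL : 0 < L) (hd : 0 < d)
    (B : Set (EuclideanSpace ℝ (Fin d))) (hB : B.Finite) (hne : B.Nonempty) :
    ∃ B2 : Set (EuclideanSpace ℝ (Fin d)), B2 ⊆ B ∧ B2.Nonempty ∧ ∃ t : ℕ,
      (∀ j ∈ covIdx d (s*L) B2, covNum d ((s+1)*L) (B2 ∩ dyadicCube d (s*L) j) = 2^t) ∧
      (∀ k, (s+1)*L ≤ k → ∀ j, (B2 ∩ dyadicCube d k j).Nonempty →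
        B2 ∩ dyadicCube d k j = B ∩ dyadicCube d k j) ∧
      B.ncard ≤ 2 * L * d * B2.ncard := by
  classical
  set k1 := s * L with hk1def
  set k2 := (s+1) * L with hk2def
  have hk12 : k1 ≤ k2 := Nat.mul_le_mul_right L (by omega)
  have hk2sub : k2 - k1 = L := by simp only [hk1def, hk2def]; rw [add_mul]; omega
  have hP : ∀ x : EuclideanSpace ℝ (Fin d),
      uidx d k1 x = fun i => uidx d k2 x i / (2:ℤ)^L := by
    intro x; rw [uidx_uidx hk12 x, hk2sub]
  -- children
  have hCfin : ∀ j : Fin d → ℤ, (covIdx d k2 (B ∩ dyadicCube d k1 j)).Finite := by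
    intro j
    rw [covIdx_eq_image]
    exact (hB.inter_of_left _).image _
  set Cf : (Fin d → ℤ) → Finset (Fin d → ℤ) := fun j => (hCfin j).toFinset with hCfdef
  have hmemCf : ∀ j j', j' ∈ Cf j ↔ j' ∈ covIdx d k2 (B ∩ dyadicCube d k1 j) := by
    intro j j'; exact (hCfin j).mem_toFinset
  have hcovC : ∀ j, covNum d k2 (B ∩ dyadicCube d k1 j) = (Cf j).card := by
    intro j; exact Set.ncard_eq_toFinset_card _ (hCfin j)
  have hparent : ∀ j j', j' ∈ Cf j → (fun i => j' i / (2:ℤ)^L) = j := by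
    intro j j' hj'
    obtain ⟨x, ⟨hxB, hx1⟩, hx2⟩ := (hmemCf j j').mp hj'
    have e1 : uidx d k1 x = j := mem_dyadicCube_iff.mp hx1
    have e2 : uidx d k2 x = j' := mem_dyadicCube_iff.mp hx2
    rw [← e1, ← e2, hP x]
  have hnle : ∀ j, (Cf j).card ≤ 2 ^ (L * d) := by
    intro j
    set M : ℕ := 2 ^ L with hM
    have hMpos : (0:ℤ) < (M:ℤ) := by positivity
    have hbnd : ∀ z : ℤ, (z % (M:ℤ)).toNat < M := by
      intro z
      have h1 := Int.emod_nonneg z hMpos.ne'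
      have h2 := Int.emod_lt_of_pos z hMpos
      omega
    set g : (Fin d → ℤ) → (Fin d → Fin M) := fun j' i => ⟨(j' i % (M:ℤ)).toNat, hbnd _⟩ with hg
    have hcard : (Finset.univ : Finset (Fin d → Fin M)).card = 2 ^ (L * d) := by
      simp [Finset.card_univ, pow_mul, hM]
    rw [← hcard]
    apply Finset.card_le_card_of_injOn g (fun _ _ => Finset.mem_univ _)
    intro a ha b hb hab
    funext i
    have hMM : ((M:ℕ):ℤ) = (2:ℤ)^L := by rw [hM]; push_cast; ring
    have hpa : a i / (M:ℤ) = j i := by rw [hMM]; exact congrFun (hparent j a ha) i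
    have hpb : b i / (M:ℤ) = j i := by rw [hMM]; exact congrFun (hparent j b hb) i
    have hmod : (a i % (M:ℤ)).toNat = (b i % (M:ℤ)).toNat := congrArg Fin.val (congrFun hab i)
    have h1 := Int.emod_nonneg (a i) hMpos.ne'
    have h2 := Int.emod_nonneg (b i) hMpos.ne'
    have hmod' : a i % (M:ℤ) = b i % (M:ℤ) := by
      rw [← Int.toNat_of_nonneg h1, ← Int.toNat_of_nonneg h2, hmod]
    calc a i = (M:ℤ) * (a i / (M:ℤ)) + a i % (M:ℤ) := (Int.mul_ediv_add_emod _ _).symm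
    _ = (M:ℤ) * (b i / (M:ℤ)) + b i % (M:ℤ) := by rw [hpa, hpb, hmod']
    _ = b i := Int.mul_ediv_add_emod _ _
  -- class function
  have hLd : 0 < L * d := Nat.mul_pos hL hd
  set cls : (Fin d → ℤ) → ℕ := fun j => min (Nat.log 2 ((Cf j).card)) (L * d - 1) with hclsdef
  have hclslt : ∀ j, cls j < L * d := fun j => lt_of_le_of_lt (min_le_right _ _) (by omega)
  have hCfpos : ∀ j ∈ covIdx d k1 B, 0 < (Cf j).card := by
    intro j hj
    obtain ⟨x, hx⟩ := hj
    rw [Finset.card_pos]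
    exact ⟨uidx d k2 x, (hmemCf _ _).mpr ⟨x, hx, mem_dyadicCube_iff.mpr rfl⟩⟩
  have hlow : ∀ j ∈ covIdx d k1 B, 2 ^ (cls j) ≤ (Cf j).card := by
    intro j hj
    rcases le_total (Nat.log 2 ((Cf j).card)) (L * d - 1) with h | h
    · rw [hclsdef]; simp only [min_eq_left h]
      exact Nat.pow_log_le_self 2 (hCfpos j hj).ne'
    · rw [hclsdef]; simp only [min_eq_right h]
      calc 2 ^ (L*d-1) ≤ 2 ^ (Nat.log 2 ((Cf j).card)) := Nat.pow_le_pow_right (by norm_num) h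
      _ ≤ (Cf j).card := Nat.pow_log_le_self 2 (hCfpos j hj).ne'
  have hup : ∀ j, (Cf j).card ≤ 2 ^ (cls j + 1) := by
    intro j
    rcases le_total (Nat.log 2 ((Cf j).card)) (L * d - 1) with h | h
    · rw [hclsdef]; simp only [min_eq_left h]
      rcases Nat.eq_zero_or_pos ((Cf j).card) with h0 | h0
      · rw [h0]; positivity
      · exact (Nat.lt_pow_succ_log_self (by norm_num) _).le
    · rw [hclsdef]; simp only [min_eq_right h]
      have : L * d - 1 + 1 = L * d := by omega
      rw [this]
      exact hnle j
  -- pigeonhole over classes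
  set Bf := hB.toFinset with hBfdef
  have hmemBf : ∀ x, x ∈ Bf ↔ x ∈ B := fun x => hB.mem_toFinset
  set fib : ℕ → Finset _ := fun t => Bf.filter (fun x => cls (uidx d k1 x) = t) with hfibdef
  have hcardfib : Bf.card = ∑ t ∈ Finset.range (L*d), (fib t).card :=
    Finset.card_eq_sum_card_fiberwise (fun x _ => Finset.mem_range.mpr (hclslt _))
  obtain ⟨t₀, ht₀mem, ht₀max⟩ := Finset.exists_max_image (Finset.range (L*d))
    (fun t => (fib t).card) ⟨0, Finset.mem_range.mpr hLd⟩
  have hpig : Bf.card ≤ L * d * (fib t₀).card := by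
    rw [hcardfib]
    calc ∑ t ∈ Finset.range (L*d), (fib t).card
        ≤ ∑ _t ∈ Finset.range (L*d), (fib t₀).card :=
          Finset.sum_le_sum (fun t ht => ht₀max t ht)
    _ = L * d * (fib t₀).card := by rw [Finset.sum_const, Finset.card_range, smul_eq_mul]
  -- weights and selection
  set w : (Fin d → ℤ) → ℕ := fun j' => (B ∩ dyadicCube d k2 j').ncard with hwdef
  have hKex : ∀ j, j ∈ covIdx d k1 B → cls j = t₀ →
      ∃ K, K ⊆ Cf j ∧ K.card = 2^t₀ ∧ ∑ j' ∈ Cf j, w j' ≤ 2 * ∑ j' ∈ K, w j' := by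
    intro j hj hcls
    obtain ⟨K, hKC, hKcard, hKsum⟩ :=
      top_select w ((Cf j).card) (Cf j) rfl (2^t₀) (hcls ▸ hlow j hj)
    refine ⟨K, hKC, hKcard, ?_⟩
    have h1 : 2^t₀ * ∑ j' ∈ Cf j, w j' ≤ 2^t₀ * (2 * ∑ j' ∈ K, w j') := by
      calc 2^t₀ * ∑ j' ∈ Cf j, w j' ≤ (Cf j).card * ∑ j' ∈ K, w j' := hKsum
      _ ≤ 2^(cls j + 1) * ∑ j' ∈ K, w j' := Nat.mul_le_mul_right _ (hup j)
      _ = 2^t₀ * (2 * ∑ j' ∈ K, w j') := by rw [hcls, pow_succ]; ring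
    exact Nat.le_of_mul_le_mul_left h1 (by positivity)
  choose! K hK1 hK2 hK3 using hKex
  -- the trimmed set
  set B2 : Set (EuclideanSpace ℝ (Fin d)) :=
    {x ∈ B | cls (uidx d k1 x) = t₀ ∧ uidx d k2 x ∈ K (uidx d k1 x)} with hB2def
  have hB2sub : B2 ⊆ B := fun x hx => hx.1
  have hB2fin : B2.Finite := hB.subset hB2sub
  -- characterization of covIdx of B2 at level k1
  have hcovB2 : covIdx d k1 B2 = {j | j ∈ covIdx d k1 B ∧ cls j = t₀} := by
    ext j
    constructor
    · rintro ⟨x, hx2, hxc⟩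
      have e : uidx d k1 x = j := mem_dyadicCube_iff.mp hxc
      exact ⟨⟨x, hx2.1, hxc⟩, e ▸ hx2.2.1⟩
    · rintro ⟨hj, hcls⟩
      have hKne : (K j).Nonempty := Finset.card_pos.mp (by rw [hK2 j hj hcls]; positivity)
      obtain ⟨j', hj'K⟩ := hKne
      obtain ⟨x, ⟨hxB, hx1⟩, hx2⟩ := (hmemCf j j').mp (hK1 j hj hcls hj'K)
      have e1 : uidx d k1 x = j := mem_dyadicCube_iff.mp hx1
      have e2 : uidx d k2 x = j' := mem_dyadicCube_iff.mp hx2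
      exact ⟨x, ⟨hxB, by rw [e1]; exact hcls, by rw [e1, e2]; exact hj'K⟩, hx1⟩
  -- property (a) : uniform branching 2^t₀ at scale s
  have hunif : ∀ j ∈ covIdx d k1 B2, covNum d k2 (B2 ∩ dyadicCube d k1 j) = 2^t₀ := by
    intro j hj
    rw [hcovB2] at hj
    obtain ⟨hjB, hjcls⟩ := hj
    have hclaim : covIdx d k2 (B2 ∩ dyadicCube d k1 j) = (↑(K j) : Set (Fin d → ℤ)) := by
      ext j'
      constructor
      · rintro ⟨x, ⟨hxB2, hx1⟩, hx2⟩
        have e1 : uidx d k1 x = j := mem_dyadicCube_iff.mp hx1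
        have e2 : uidx d k2 x = j' := mem_dyadicCube_iff.mp hx2
        have := hxB2.2.2
        rw [e1, e2] at this
        exact this
      · intro hj'K
        rw [Finset.mem_coe] at hj'K
        obtain ⟨x, ⟨hxB, hx1⟩, hx2⟩ := (hmemCf j j').mp (hK1 j hjB hjcls hj'K)
        have e1 : uidx d k1 x = j := mem_dyadicCube_iff.mp hx1
        have e2 : uidx d k2 x = j' := mem_dyadicCube_iff.mp hx2
        exact ⟨x, ⟨⟨hxB, by rw [e1]; exact hjcls, by rw [e1, e2]; exact hj'K⟩, hx1⟩, hx2⟩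
    rw [covNum, hclaim, Set.ncard_coe_finset, hK2 j hjB hjcls]
  -- property (b) at level k2
  have hb2 : ∀ j', (B2 ∩ dyadicCube d k2 j').Nonempty →
      B2 ∩ dyadicCube d k2 j' = B ∩ dyadicCube d k2 j' := by
    rintro j' ⟨x₀, hx₀2, hx₀c⟩
    have e2 : uidx d k2 x₀ = j' := mem_dyadicCube_iff.mp hx₀c
    apply Set.Subset.antisymm (inter_subset_inter_left _ hB2sub)
    rintro y ⟨hyB, hyc⟩
    have ey2 : uidx d k2 y = j' := mem_dyadicCube_iff.mp hyc
    have ey1 : uidx d k1 y = uidx d k1 x₀ := by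
      rw [hP y, hP x₀, ey2, e2]
    refine ⟨⟨hyB, ?_, ?_⟩, hyc⟩
    · rw [ey1]; exact hx₀2.2.1
    · rw [ey1, ey2, ← e2]; exact hx₀2.2.2
  -- property (b') at all finer levels
  have hb' : ∀ k, k2 ≤ k → ∀ j, (B2 ∩ dyadicCube d k j).Nonempty →
      B2 ∩ dyadicCube d k j = B ∩ dyadicCube d k j := by
    rintro k hk j ⟨x₀, hx₀⟩
    set j'' := uidx d k2 x₀ with hj''
    have e0 : uidx d k x₀ = j := mem_dyadicCube_iff.mp hx₀.2
    have hsub : dyadicCube d k j ⊆ dyadicCube d k2 j'' := by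
      intro y hy
      rw [mem_dyadicCube_iff]
      have e : uidx d k y = j := mem_dyadicCube_iff.mp hy
      rw [uidx_uidx hk y, e, hj'', uidx_uidx hk x₀, e0]
    have hx₀mem : x₀ ∈ B2 ∩ dyadicCube d k2 j'' := ⟨hx₀.1, mem_dyadicCube_iff.mpr rfl⟩
    calc B2 ∩ dyadicCube d k j = (B2 ∩ dyadicCube d k2 j'') ∩ dyadicCube d k j := by
          ext x
          simp only [mem_inter_iff]
          exact ⟨fun h => ⟨⟨h.1, hsub h.2⟩, h.2⟩, fun h => ⟨h.1.1, h.2⟩⟩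
    _ = (B ∩ dyadicCube d k2 j'') ∩ dyadicCube d k j := by rw [hb2 j'' ⟨x₀, hx₀mem⟩]
    _ = B ∩ dyadicCube d k j := by
          ext x
          simp only [mem_inter_iff]
          exact ⟨fun h => ⟨h.1.1, h.2⟩, fun h => ⟨⟨h.1, hsub h.2⟩, h.2⟩⟩
  -- counting
  set B2f := hB2fin.toFinset with hB2fdef
  set Bt := fib t₀ with hBtdef
  set Jtf := Bt.image (fun x => uidx d k1 x) with hJtfdef
  have hJtf : ∀ j ∈ Jtf, j ∈ covIdx d k1 B ∧ cls j = t₀ := by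
    intro j hj
    obtain ⟨x, hx, rfl⟩ := Finset.mem_image.mp hj
    obtain ⟨hx1, hx2⟩ := Finset.mem_filter.mp hx
    have hxB : x ∈ B := (hmemBf x).mp hx1
    exact ⟨⟨x, hxB, mem_dyadicCube_iff.mpr rfl⟩, hx2⟩
  have e2card : ∀ j ∈ Jtf, (Bt.filter (fun x => uidx d k1 x = j)).card = ∑ j' ∈ Cf j, w j' := by
    intro j hj
    obtain ⟨hjB, hjcls⟩ := hJtf j hj
    have hset : Bt.filter (fun x => uidx d k1 x = j) = Bf.filter (fun x => uidx d k1 x = j) := by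
      ext x
      simp only [hBtdef, hfibdef, Finset.mem_filter]
      constructor
      · rintro ⟨⟨h1, _⟩, h3⟩; exact ⟨h1, h3⟩
      · rintro ⟨h1, h3⟩; exact ⟨⟨h1, by rw [h3]; exact hjcls⟩, h3⟩
    rw [hset]
    rw [Finset.card_eq_sum_card_fiberwise (f := fun x => uidx d k2 x) (t := Cf j) ?_]
    · apply Finset.sum_congr rfl
      intro j' hj'
      have hset2 : (Bf.filter (fun x => uidx d k1 x = j)).filter (fun x => uidx d k2 x = j')
          = (hB.inter_of_left (dyadicCube d k2 j')).toFinset := by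
        ext x
        simp only [Finset.mem_filter, Set.Finite.mem_toFinset, mem_inter_iff,
          mem_dyadicCube_iff]
        constructor
        · rintro ⟨⟨h1, _⟩, h3⟩; exact ⟨(hmemBf x).mp h1, h3⟩
        · rintro ⟨h1, h2⟩
          refine ⟨⟨(hmemBf x).mpr h1, ?_⟩, h2⟩
          rw [hP x, h2]
          exact hparent j j' hj'
      rw [hset2, hwdef]
      exact (Set.ncard_eq_toFinset_card _ _).symm
    · intro x hx
      obtain ⟨h1, h2⟩ := Finset.mem_filter.mp hx
      refine (hmemCf j _).mpr ⟨x, ⟨(hmemBf x).mp h1, mem_dyadicCube_iff.mpr h2⟩,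
        mem_dyadicCube_iff.mpr rfl⟩
  have e3card : ∀ j ∈ Jtf, (B2f.filter (fun x => uidx d k1 x = j)).card = ∑ j' ∈ K j, w j' := by
    intro j hj
    obtain ⟨hjB, hjcls⟩ := hJtf j hj
    rw [Finset.card_eq_sum_card_fiberwise (f := fun x => uidx d k2 x) (t := K j) ?_]
    · apply Finset.sum_congr rfl
      intro j' hj'K
      have hj'C := hK1 j hjB hjcls hj'K
      have hset2 : (B2f.filter (fun x => uidx d k1 x = j)).filter (fun x => uidx d k2 x = j')
          = (hB.inter_of_left (dyadicCube d k2 j')).toFinset := by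
        ext x
        simp only [Finset.mem_filter, Set.Finite.mem_toFinset, mem_inter_iff,
          mem_dyadicCube_iff, hB2fdef]
        constructor
        · rintro ⟨⟨h1, _⟩, h3⟩
          exact ⟨h1.1, h3⟩
        · rintro ⟨h1, h2⟩
          have e1 : uidx d k1 x = j := by rw [hP x, h2]; exact hparent j j' hj'C
          refine ⟨⟨⟨h1, ?_, ?_⟩, e1⟩, h2⟩
          · rw [e1]; exact hjcls
          · rw [e1, h2]; exact hj'K
      rw [hset2, hwdef]
      exact (Set.ncard_eq_toFinset_card _ _).symm
    · intro x hx
      obtain ⟨h1, h2⟩ := Finset.mem_filter.mp hx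
      have hx2 : x ∈ B2 := hB2fin.mem_toFinset.mp h1
      have := hx2.2.2
      rw [h2] at this
      exact this
  have hBtcard : Bt.card = ∑ j ∈ Jtf, (Bt.filter (fun x => uidx d k1 x = j)).card :=
    Finset.card_eq_sum_card_fiberwise (fun x hx => Finset.mem_image_of_mem _ hx)
  have hB2mapsto : ∀ x ∈ B2f, (fun x => uidx d k1 x) x ∈ Jtf := by
    intro x hx
    have hx2 : x ∈ B2 := hB2fin.mem_toFinset.mp hx
    have hxt : x ∈ Bt := Finset.mem_filter.mpr ⟨(hmemBf x).mpr hx2.1, hx2.2.1⟩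
    exact Finset.mem_image_of_mem _ hxt
  have hB2card : B2f.card = ∑ j ∈ Jtf, (B2f.filter (fun x => uidx d k1 x = j)).card :=
    Finset.card_eq_sum_card_fiberwise hB2mapsto
  have hhalf : Bt.card ≤ 2 * B2f.card := by
    rw [hBtcard, hB2card, Finset.mul_sum]
    apply Finset.sum_le_sum
    intro j hj
    rw [e2card j hj, e3card j hj]
    exact hK3 j (hJtf j hj).1 (hJtf j hj).2
  have hfinal : Bf.card ≤ 2 * L * d * B2f.card := by
    calc Bf.card ≤ L * d * Bt.card := hpig
    _ ≤ L * d * (2 * B2f.card) := Nat.mul_le_mul_left _ hhalf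
    _ = 2 * L * d * B2f.card := by ring
  have hncard : B.ncard = Bf.card := Set.ncard_eq_toFinset_card _ hB
  have hncard2 : B2.ncard = B2f.card := Set.ncard_eq_toFinset_card _ hB2fin
  have hB2ne : B2.Nonempty := by
    have hBfpos : 0 < Bf.card := Finset.card_pos.mpr ⟨hne.some, (hmemBf _).mpr hne.some_mem⟩
    have hpos : 0 < B2f.card := by
      rcases Nat.eq_zero_or_pos B2f.card with h0 | h0
      · rw [h0, Nat.mul_zero] at hfinal; omega
      · exact h0
    obtain ⟨x, hx⟩ := Finset.card_pos.mp hpos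
    exact ⟨x, hB2fin.mem_toFinset.mp hx⟩
  exact ⟨B2, hB2sub, hB2ne, t₀, hunif, hb', by rw [hncard, hncard2]; exact hfinal⟩

lemma main_ind (d L : ℕ) (hL : 0 < L) (hd : 0 < d) :
    ∀ (m s : ℕ) (B : Set (EuclideanSpace ℝ (Fin d))), B.Finite → B.Nonempty →
      ∃ B', B' ⊆ B ∧ B'.Nonempty ∧ ∃ R : ℕ → ℕ,
        (∀ s', s ≤ s' → s' < s + m → ∀ j ∈ covIdx d (s'*L) B',
          covNum d ((s'+1)*L) (B' ∩ dyadicCube d (s'*L) j) = R s') ∧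
        (B'.ncard : ℝ) ≥ ((2*L*d : ℝ))⁻¹ ^ m * B.ncard := by
  intro m
  induction m with
  | zero =>
    intro s B hB hne
    exact ⟨B, Set.Subset.refl B, hne, fun _ => 0,
      fun s' h1 h2 => absurd h2 (by omega), by simp⟩
  | succ m ih =>
    intro s B hB hne
    obtain ⟨B1, hB1sub, hB1ne, R1, hR1, hcard1⟩ := ih (s+1) B hB hne
    obtain ⟨B2, hB2sub, hB2ne, t, hta, htb, htc⟩ :=
      step_lemma d L s hL hd B1 (hB.subset hB1sub) hB1ne
    refine ⟨B2, hB2sub.trans hB1sub, hB2ne, fun s' => if s' = s then 2^t else R1 s', ?_, ?_⟩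
    · intro s' h1 h2 j hj
      rcases eq_or_lt_of_le h1 with rfl | hlt
      · simp only [if_pos rfl]
        exact hta j hj
      · have hne' : s' ≠ s := by omega
        simp only [if_neg hne']
        have hkk : (s+1)*L ≤ s'*L := Nat.mul_le_mul_right L (by omega)
        obtain ⟨x, hx⟩ := hj
        have heq := htb (s'*L) hkk j ⟨x, hx⟩
        rw [heq]
        have hjB1 : j ∈ covIdx d (s'*L) B1 := ⟨x, heq ▸ hx⟩
        exact hR1 s' (by omega) (by omega) j hjB1
    · have hLpos : (0:ℝ) < L := Nat.cast_pos.mpr hL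
      have hdpos : (0:ℝ) < d := Nat.cast_pos.mpr hd
      have hpos : (0:ℝ) < 2*L*d := by positivity
      have hc2 : (B1.ncard : ℝ) ≤ 2*L*d * B2.ncard := by exact_mod_cast htc
      rw [ge_iff_le, pow_succ]
      calc ((2*L*d:ℝ))⁻¹^m * ((2*L*d:ℝ))⁻¹ * B.ncard
          = ((2*L*d:ℝ))⁻¹ * (((2*L*d:ℝ))⁻¹^m * B.ncard) := by ring
      _ ≤ ((2*L*d:ℝ))⁻¹ * B1.ncard := mul_le_mul_of_nonneg_left hcard1 (by positivity)
      _ ≤ B2.ncard := by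
            rw [inv_mul_le_iff₀ hpos]
            exact hc2

lemma covNum_self {d k : ℕ} {j : Fin d → ℤ} {B : Set (EuclideanSpace ℝ (Fin d))}
    (h : j ∈ covIdx d k B) : covNum d k (B ∩ dyadicCube d k j) = 1 := by
  rw [covNum, covIdx_eq_image, inter_cube]
  have himg : uidx d k '' {x ∈ B | uidx d k x = j} = {j} := by
    apply Set.Subset.antisymm
    · rintro _ ⟨x, hx, rfl⟩
      exact hx.2
    · rintro j' hj'
      rw [mem_singleton_iff] at hj'
      subst hj'
      obtain ⟨x, hxB, hxc⟩ := h
      have e := mem_dyadicCube_iff.mp hxc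
      exact ⟨x, ⟨hxB, e⟩, e⟩
  rw [himg, Set.ncard_singleton]

lemma covNum_dzero {k : ℕ} {B : Set (EuclideanSpace ℝ (Fin 0))} (h : B.Nonempty) :
    covNum 0 k B = 1 := by
  obtain ⟨x, hx⟩ := h
  have hsub : ∀ a b : Fin 0 → ℤ, a = b := fun a b => funext (fun i => i.elim0)
  have : covIdx 0 k B = {uidx 0 k x} := by
    apply Set.Subset.antisymm
    · intro j _
      rw [mem_singleton_iff]
      exact hsub j _
    · intro j hj
      rw [mem_singleton_iff] at hj
      subst hj
      exact ⟨x, hx, mem_dyadicCube_iff.mpr rfl⟩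
  rw [covNum, this, Set.ncard_singleton]

lemma dyadic_finite {d m : ℕ} {A : Set (EuclideanSpace ℝ (Fin d))}
    (hA : IsDyadicSet d m A) : A.Finite := by
  have hinj : Set.InjOn (uidx d m) A := by
    intro x hx y hy hxy
    ext i
    obtain ⟨n, hn⟩ := hA.2 x hx i
    obtain ⟨n', hn'⟩ := hA.2 y hy i
    have hfx : uidx d m x i = n := by
      simp only [uidx, hn]
      rw [mul_div_cancel₀ _ (by positivity : ((2:ℝ)^m) ≠ 0)]
      exact Int.floor_intCast n
    have hfy : uidx d m y i = n' := by
      simp only [uidx, hn']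
      rw [mul_div_cancel₀ _ (by positivity : ((2:ℝ)^m) ≠ 0)]
      exact Int.floor_intCast n'
    rw [hn, hn']
    have : n = n' := by rw [← hfx, ← hfy, hxy]
    rw [this]
  apply Set.Finite.of_finite_image ?_ hinj
  apply Set.Finite.subset (Set.Finite.pi (fun _ : Fin d => Set.finite_Ico (0:ℤ) (2^m)))
  rintro _ ⟨x, hx, rfl⟩
  intro i _
  have h1 := (hA.1 hx i).1
  have h2 := (hA.1 hx i).2
  constructor
  · exact Int.floor_nonneg.mpr (by positivity)
  · simp only [uidx]
    rw [Int.floor_lt]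
    push_cast
    calc (2:ℝ)^m * x i < 2^m * 1 := by
          apply mul_lt_mul_of_pos_left h2 (by positivity)
    _ = 2^m := mul_one _

/-- **Uniformization lemma** (Bourgain; Keleti–Shmerkin): every nonempty
`2^{-LS}`-set `A` has an `(L,S)`-uniform subset `A'` with `|A'| ≥ (2Ld)^{-S} |A|`. -/
theorem exists_uniform_subset (d L S : ℕ) (A : Set (EuclideanSpace ℝ (Fin d)))
    (hA : IsDyadicSet d (L * S) A) (hne : A.Nonempty) :
    ∃ A' ⊆ A, ∃ R : ℕ → ℕ, IsUniform d L S R A' ∧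
      (A'.ncard : ℝ) ≥ ((2 * L * d : ℝ))⁻¹ ^ S * A.ncard := by
  have hAfin : A.Finite := dyadic_finite hA
  by_cases hLd : 0 < L ∧ 0 < d
  · obtain ⟨A', hsub, _, R, hunif, hcard⟩ := main_ind d L hLd.1 hLd.2 S 0 A hAfin hne
    refine ⟨A', hsub, R, ?_, hcard⟩
    intro s hs j hj
    exact hunif s (Nat.zero_le s) (by omega) j hj
  · -- degenerate case : L = 0 or d = 0
    refine ⟨A, Set.Subset.refl A, fun _ => 1, ?_, ?_⟩
    · intro s _ j hj
      rcases Nat.eq_zero_or_pos L with hL0 | hLpos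
      · subst hL0
        simp only [Nat.mul_zero] at hj ⊢
        exact covNum_self hj
      · have hd0 : d = 0 := by omega
        subst hd0
        obtain ⟨x, hx⟩ := hj
        exact covNum_dzero ⟨x, hx.1, by
          rw [mem_dyadicCube_iff]
          exact funext (fun i => i.elim0)⟩
    · rcases Nat.eq_zero_or_pos S with hS0 | hSpos
      · subst hS0
        simp
      · have hzero : ((2 * L * d : ℝ))⁻¹ = 0 ∨ ((2 * L * d : ℝ))⁻¹ ^ S * A.ncard ≤ A.ncard := by
          rcases Nat.eq_zero_or_pos L with h | h
          · left; subst h; norm_num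
          · left
            have : d = 0 := by omega
            subst this
            norm_num
        rcases hzero with h | h
        · rw [h, zero_pow hSpos.ne', zero_mul]
          exact_mod_cast Nat.cast_nonneg _
        · exact h
end
end

section
/- Let μ, ν be finite Borel measures on [0,1]^d and m ∈ ℕ. Define the discretizations μ^{(m)}(x) = μ(x + 2^{-m}[-1/2,1/2)^d) for x ∈ 2^{-m}ℤ^d, and similarly ν^{(m)}. Then the additive energy at scale 2^{-m} satisfies E_{2^{-m}}(μ,ν) ≍_d ‖μ^{(m)} * ν^{(m)}‖₂², i.e. the two quantities agree up to multiplicative constants depending only on d. -/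
open Set Metric Pointwise

noncomputable section

open MeasureTheory

/-- The additive energy of measures `μ, ν` at scale `r`:
`E_r(μ,ν) = (μ²×ν²){(x₁,x₂,y₁,y₂) : |x₁+y₁−x₂−y₂| ≤ r}`. -/
def scaleEnergy (d : ℕ) (r : ℝ) (μ ν : Measure (EuclideanSpace ℝ (Fin d))) : ℝ :=
  (((μ.prod μ).prod (ν.prod ν))
    {p : (EuclideanSpace ℝ (Fin d) × EuclideanSpace ℝ (Fin d)) ×
      EuclideanSpace ℝ (Fin d) × EuclideanSpace ℝ (Fin d) |
        ‖p.1.1 + p.2.1 - (p.1.2 + p.2.2)‖ ≤ r}).toReal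

/-- The `2^{-m}`-discretization of `μ`, as a function on the grid `2^{-m}ℤ^d`:
`μ^{(m)}(j/2^m) = μ(j/2^m + 2^{-m}[-1/2,1/2)^d)`. -/
def discretization (d m : ℕ) (μ : Measure (EuclideanSpace ℝ (Fin d)))
    (j : Fin d → ℤ) : ℝ :=
  (μ {y | ∀ i, (j i : ℝ) - 1/2 ≤ 2 ^ m * y i ∧ 2 ^ m * y i < (j i : ℝ) + 1/2}).toReal

/-- The squared discrete `L²` norm of the convolution of two functions on `ℤ^d`:
`‖f*g‖₂² = ∑_z (∑_x f(x) g(z−x))²`. -/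
def convL2Sq (d : ℕ) (f g : (Fin d → ℤ) → ℝ) : ℝ :=
  ∑' z : Fin d → ℤ, (∑' x : Fin d → ℤ, f x * g (z - x)) ^ 2


open scoped ENNReal NNReal

namespace SEAux

variable {d : ℕ}

abbrev It (d : ℕ) := Fin d → ℤ

def grid (d k : ℕ) (x : EuclideanSpace ℝ (Fin d)) : Fin d → ℤ :=
  fun i => ⌊2 ^ k * x i + 1/2⌋

lemma measurable_grid (d k : ℕ) : Measurable (grid d k) := by
  apply measurable_pi_lambda
  intro i
  exact ((((EuclideanSpace.proj i : EuclideanSpace ℝ (Fin d) →L[ℝ] ℝ).continuous.measurable).const_mul _).add_const _).floor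

def cell (d k : ℕ) (μ : Measure (EuclideanSpace ℝ (Fin d))) (j : Fin d → ℤ) : ℝ≥0∞ :=
  μ (grid d k ⁻¹' {j})

def Fc (d k : ℕ) (μ ν : Measure (EuclideanSpace ℝ (Fin d))) (z : Fin d → ℤ) : ℝ≥0∞ :=
  ∑' j : Fin d → ℤ, cell d k μ j * cell d k ν (z - j)

def Dmap (d k : ℕ)
    (p : (EuclideanSpace ℝ (Fin d) × EuclideanSpace ℝ (Fin d)) ×
      EuclideanSpace ℝ (Fin d) × EuclideanSpace ℝ (Fin d)) : Fin d → ℤ :=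
  grid d k p.1.1 + grid d k p.2.1 - grid d k p.1.2 - grid d k p.2.2

lemma sum_cell (k : ℕ) (μ : Measure (EuclideanSpace ℝ (Fin d))) :
    ∑' j : Fin d → ℤ, cell d k μ j = μ Set.univ := by
  simp only [cell]
  rw [← measure_iUnion]
  · congr 1
    ext x
    simp only [Set.mem_iUnion, Set.mem_preimage, Set.mem_singleton_iff, Set.mem_univ, iff_true]
    exact ⟨grid d k x, rfl⟩
  · exact fun a b hab => Disjoint.preimage _ (by simpa using hab)
  · exact fun j => measurable_grid d k (measurableSet_singleton j)

lemma Fc_ne_top (k : ℕ) (μ ν : Measure (EuclideanSpace ℝ (Fin d)))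
    [IsFiniteMeasure μ] [IsFiniteMeasure ν] (z : Fin d → ℤ) : Fc d k μ ν z ≠ ⊤ := by
  have h1 : Fc d k μ ν z ≤ μ Set.univ * ν Set.univ := by
    calc Fc d k μ ν z ≤ ∑' j : Fin d → ℤ, cell d k μ j * ν Set.univ :=
          ENNReal.tsum_le_tsum fun j => mul_le_mul_right (measure_mono (Set.subset_univ _)) _
      _ = (∑' j : Fin d → ℤ, cell d k μ j) * ν Set.univ := ENNReal.tsum_mul_right
      _ = μ Set.univ * ν Set.univ := by rw [sum_cell]
  exact ne_top_of_le_ne_top (ENNReal.mul_ne_top (measure_ne_top _ _) (measure_ne_top _ _)) h1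

lemma measure_D_eq (k : ℕ) (μ ν : Measure (EuclideanSpace ℝ (Fin d)))
    [SFinite μ] [SFinite ν] (t : Fin d → ℤ) :
    ((μ.prod μ).prod (ν.prod ν)) {p | Dmap d k p = t}
      = ∑' z : Fin d → ℤ, Fc d k μ ν (z + t) * Fc d k μ ν z := by
  classical
  set g := grid d k with hg
  set q : (EuclideanSpace ℝ (Fin d) × EuclideanSpace ℝ (Fin d)) ×
      EuclideanSpace ℝ (Fin d) × EuclideanSpace ℝ (Fin d) → ((It d) × (It d)) × (It d) × (It d) :=
    fun p => ((g p.1.1, g p.1.2), (g p.2.1, g p.2.2)) with hq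
  have hqm : Measurable q := by
    exact ((measurable_grid d k |>.comp measurable_fst.fst).prodMk
        (measurable_grid d k |>.comp measurable_fst.snd)).prodMk
      ((measurable_grid d k |>.comp measurable_snd.fst).prodMk
        (measurable_grid d k |>.comp measurable_snd.snd))
  set cset : Set (((It d) × (It d)) × (It d) × (It d)) := {v | v.1.1 + v.2.1 - v.1.2 - v.2.2 = t} with hcset
  have hset : {p | Dmap d k p = t} = ⋃ v ∈ cset, q ⁻¹' {v} := by
    ext p
    simp only [Set.mem_setOf_eq, Set.mem_iUnion, Set.mem_preimage, Set.mem_singleton_iff, Dmap]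
    constructor
    · intro h
      exact ⟨q p, h, rfl⟩
    · rintro ⟨v, hv, rfl⟩
      exact hv
  rw [hset, measure_biUnion (Set.to_countable _)
    (fun v _ v' _ hne => Disjoint.preimage q (Set.disjoint_singleton.2 hne))
    (fun v _ => hqm (measurableSet_singleton v))]
  have hcellval : ∀ v : ((It d) × (It d)) × (It d) × (It d),
      ((μ.prod μ).prod (ν.prod ν)) (q ⁻¹' {v})
        = cell d k μ v.1.1 * cell d k μ v.1.2 * (cell d k ν v.2.1 * cell d k ν v.2.2) := by
    intro v
    have : q ⁻¹' {v} = ((g ⁻¹' {v.1.1}) ×ˢ (g ⁻¹' {v.1.2})) ×ˢ ((g ⁻¹' {v.2.1}) ×ˢ (g ⁻¹' {v.2.2})) := by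
      ext p
      simp [hq, Set.mem_prod, Prod.ext_iff, and_assoc]
    rw [this]
    rw [Measure.prod_prod]
    rw [Measure.prod_prod]
    rw [Measure.prod_prod]
    rfl
  -- reindex by the equiv
  set e : ((It d) × (It d) × (It d)) ≃ cset :=
    { toFun := fun w => ⟨((w.2.1, w.2.2), (w.1 + t - w.2.1, w.1 - w.2.2)), by
        simp only [hcset, Set.mem_setOf_eq]; funext i
        simp only [Pi.add_apply, Pi.sub_apply]; omega⟩
      invFun := fun v => (v.1.1.2 + v.1.2.2, v.1.1.1, v.1.1.2)
      left_inv := by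
        rintro ⟨z, j1, j2⟩
        simp only []
        refine Prod.ext ?_ rfl
        funext i
        simp only [Pi.add_apply, Pi.sub_apply]
        omega
      right_inv := by
        rintro ⟨⟨⟨j1, j2⟩, k1, k2⟩, hv⟩
        simp only [hcset, Set.mem_setOf_eq] at hv
        apply Subtype.ext
        simp only []
        refine Prod.ext (Prod.ext rfl rfl) (Prod.ext ?_ ?_)
        · show j2 + k2 + t - j1 = k1
          rw [← hv]; funext i
          simp only [Pi.add_apply, Pi.sub_apply]; omega
        · show j2 + k2 - j2 = k2
          funext i
          simp only [Pi.add_apply, Pi.sub_apply]; omega } with he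
  rw [← e.tsum_eq]
  have : ∀ w : (It d) × (It d) × (It d),
      ((μ.prod μ).prod (ν.prod ν)) (q ⁻¹' {(↑(e w) : ((It d) × (It d)) × (It d) × (It d))})
        = (cell d k μ w.2.1 * cell d k ν (w.1 + t - w.2.1))
            * (cell d k μ w.2.2 * cell d k ν (w.1 - w.2.2)) := by
    intro w
    rw [hcellval]
    simp only [he, Equiv.coe_fn_mk]
    ring
  calc ∑' w : (It d) × (It d) × (It d), ((μ.prod μ).prod (ν.prod ν)) (q ⁻¹' {(↑(e w) : ((It d) × (It d)) × (It d) × (It d))})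
      = ∑' w : (It d) × (It d) × (It d), (cell d k μ w.2.1 * cell d k ν (w.1 + t - w.2.1))
            * (cell d k μ w.2.2 * cell d k ν (w.1 - w.2.2)) := tsum_congr this
    _ = ∑' z : (It d), ∑' w : (It d) × (It d), (cell d k μ w.1 * cell d k ν (z + t - w.1))
            * (cell d k μ w.2 * cell d k ν (z - w.2)) := ENNReal.tsum_prod'
    _ = ∑' z : (It d), Fc d k μ ν (z + t) * Fc d k μ ν z := by
        refine tsum_congr fun z => ?_
        rw [ENNReal.tsum_prod']
        calc ∑' (j1 : (It d)) (j2 : (It d)), (cell d k μ j1 * cell d k ν (z + t - j1))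
              * (cell d k μ j2 * cell d k ν (z - j2))
            = ∑' (j1 : (It d)), (cell d k μ j1 * cell d k ν (z + t - j1)) * Fc d k μ ν z := by
              exact tsum_congr fun j1 => ENNReal.tsum_mul_left
          _ = Fc d k μ ν (z + t) * Fc d k μ ν z := ENNReal.tsum_mul_right

lemma amgm (a b : ℝ≥0∞) : 2 * (a * b) ≤ a ^ 2 + b ^ 2 := by
  rcases eq_or_ne a ⊤ with ha | ha
  · rcases eq_or_ne b 0 with hb | hb
    · simp [hb]
    · have : a ^ 2 + b ^ 2 = ⊤ := by simp [ha, pow_two]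
      simp [this]
  · rcases eq_or_ne b ⊤ with hb | hb
    · rcases eq_or_ne a 0 with ha0 | ha0
      · simp [ha0]
      · have : a ^ 2 + b ^ 2 = ⊤ := by simp [hb, pow_two]
        simp [this]
    · lift a to ℝ≥0 using ha
      lift b to ℝ≥0 using hb
      rw [show ((2 : ℝ≥0∞)) = ((2 : ℝ≥0) : ℝ≥0∞) by norm_cast]
      rw [← ENNReal.coe_mul, ← ENNReal.coe_mul, ← ENNReal.coe_pow, ← ENNReal.coe_pow,
        ← ENNReal.coe_add, ENNReal.coe_le_coe, ← NNReal.coe_le_coe]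
      push_cast
      nlinarith [sq_nonneg ((a : ℝ) - (b : ℝ))]

lemma measure_D_le (k : ℕ) (μ ν : Measure (EuclideanSpace ℝ (Fin d)))
    [IsFiniteMeasure μ] [IsFiniteMeasure ν] (t : Fin d → ℤ) :
    ((μ.prod μ).prod (ν.prod ν)) {p | Dmap d k p = t}
      ≤ ((μ.prod μ).prod (ν.prod ν)) {p | Dmap d k p = (0 : Fin d → ℤ)} := by
  rw [measure_D_eq, measure_D_eq]
  set F := Fc d k μ ν with hF
  have key : 2 * ∑' z : Fin d → ℤ, F (z + t) * F z ≤ 2 * ∑' z : Fin d → ℤ, F (z + 0) * F z := by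
    simp only [add_zero]
    rw [← ENNReal.tsum_mul_left]
    calc ∑' z : Fin d → ℤ, 2 * (F (z + t) * F z)
        ≤ ∑' z : Fin d → ℤ, (F (z + t) ^ 2 + F z ^ 2) :=
          ENNReal.tsum_le_tsum fun z => amgm _ _
      _ = (∑' z : Fin d → ℤ, F (z + t) ^ 2) + ∑' z : Fin d → ℤ, F z ^ 2 := ENNReal.tsum_add
      _ = (∑' z : Fin d → ℤ, F z ^ 2) + ∑' z : Fin d → ℤ, F z ^ 2 := by
          have hsh : ∑' z : Fin d → ℤ, F (z + t) ^ 2 = ∑' z : Fin d → ℤ, F z ^ 2 := by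
            simpa using (Equiv.addRight t).tsum_eq (fun z => F z ^ 2)
          rw [hsh]
      _ = 2 * ∑' z : Fin d → ℤ, F z * F z := by rw [two_mul]; simp [pow_two]
  exact (ENNReal.mul_le_mul_iff_right two_ne_zero ENNReal.ofNat_ne_top).1 key

lemma discretization_cell (m : ℕ) (μ : Measure (EuclideanSpace ℝ (Fin d))) (j : Fin d → ℤ) :
    discretization d m μ j = (cell d m μ j).toReal := by
  have hs : {y : EuclideanSpace ℝ (Fin d) |
      ∀ i, (j i : ℝ) - 1/2 ≤ 2 ^ m * y i ∧ 2 ^ m * y i < (j i : ℝ) + 1/2}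
      = grid d m ⁻¹' {j} := by
    ext y
    simp only [Set.mem_setOf_eq, Set.mem_preimage, Set.mem_singleton_iff, grid, funext_iff]
    constructor
    · intro h i
      have := h i
      rw [Int.floor_eq_iff]
      constructor <;> push_cast <;> linarith [this.1, this.2]
    · intro h i
      have := (Int.floor_eq_iff).1 (h i)
      push_cast at this
      constructor <;> linarith [this.1, this.2]
  rw [discretization, cell, hs]

lemma convL2Sq_eq (m : ℕ) (μ ν : Measure (EuclideanSpace ℝ (Fin d)))
    [IsFiniteMeasure μ] [IsFiniteMeasure ν] :
    convL2Sq d (discretization d m μ) (discretization d m ν)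
      = (((μ.prod μ).prod (ν.prod ν)) {p | Dmap d m p = (0 : Fin d → ℤ)}).toReal := by
  rw [measure_D_eq]
  simp only [add_zero]
  rw [convL2Sq]
  have h1 : ∀ z : Fin d → ℤ,
      ∑' x : Fin d → ℤ, discretization d m μ x * discretization d m ν (z - x)
        = (Fc d m μ ν z).toReal := by
    intro z
    calc ∑' x : Fin d → ℤ, discretization d m μ x * discretization d m ν (z - x)
        = ∑' x : Fin d → ℤ, (cell d m μ x * cell d m ν (z - x)).toReal :=
          tsum_congr fun x => by
            rw [discretization_cell, discretization_cell, ENNReal.toReal_mul]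
      _ = (Fc d m μ ν z).toReal := by
          rw [Fc]
          exact (ENNReal.tsum_toReal_eq
            (fun j => ENNReal.mul_ne_top (measure_ne_top _ _) (measure_ne_top _ _))).symm
  calc ∑' z : Fin d → ℤ,
        (∑' x : Fin d → ℤ, discretization d m μ x * discretization d m ν (z - x)) ^ 2
      = ∑' z : Fin d → ℤ, ((Fc d m μ ν z) ^ 2).toReal := by
        refine tsum_congr fun z => ?_
        rw [h1, ← ENNReal.toReal_pow]
    _ = (∑' z : Fin d → ℤ, Fc d m μ ν z ^ 2).toReal :=
        (ENNReal.tsum_toReal_eq (f := fun z => Fc d m μ ν z ^ 2)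
          (fun z => ENNReal.pow_ne_top (Fc_ne_top m μ ν z))).symm
    _ = (∑' z : Fin d → ℤ, Fc d m μ ν z * Fc d m μ ν z).toReal := by
        congr 1
        exact tsum_congr fun z => by rw [pow_two]

lemma coord_le_norm (x : EuclideanSpace ℝ (Fin d)) (i : Fin d) : |x i| ≤ ‖x‖ := by
  rw [EuclideanSpace.norm_eq, ← Real.sqrt_sq_eq_abs]
  apply Real.sqrt_le_sqrt
  calc x i ^ 2 = ‖x i‖ ^ 2 := by rw [Real.norm_eq_abs, sq_abs]
    _ ≤ ∑ j, ‖x j‖ ^ 2 :=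
      Finset.single_le_sum (f := fun j => ‖x j‖ ^ 2) (fun j _ => sq_nonneg _) (Finset.mem_univ i)

lemma norm_le_of_coord {x : EuclideanSpace ℝ (Fin d)} {c : ℝ} (hc : 0 ≤ c)
    (h : ∀ i, |x i| ≤ c) : ‖x‖ ≤ Real.sqrt d * c := by
  rw [EuclideanSpace.norm_eq]
  have h1 : ∑ i, ‖x i‖ ^ 2 ≤ (d : ℝ) * c ^ 2 := by
    calc ∑ i, ‖x i‖ ^ 2 ≤ ∑ _i : Fin d, c ^ 2 :=
          Finset.sum_le_sum fun i _ => by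
            rw [Real.norm_eq_abs]
            exact pow_le_pow_left₀ (abs_nonneg _) (h i) 2
      _ = (d : ℝ) * c ^ 2 := by simp [Finset.sum_const, Finset.card_univ, mul_comm]
  calc Real.sqrt (∑ i, ‖x i‖ ^ 2) ≤ Real.sqrt ((d : ℝ) * c ^ 2) := Real.sqrt_le_sqrt h1
    _ = Real.sqrt d * c := by
        rw [Real.sqrt_mul (by positivity), Real.sqrt_sq hc]

lemma Dmap_coord (k : ℕ)
    (p : (EuclideanSpace ℝ (Fin d) × EuclideanSpace ℝ (Fin d)) ×
      EuclideanSpace ℝ (Fin d) × EuclideanSpace ℝ (Fin d)) (i : Fin d) :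
    |(Dmap d k p i : ℝ) - 2 ^ k * (p.1.1 + p.2.1 - (p.1.2 + p.2.2)) i| ≤ 2 := by
  have key : ∀ x : EuclideanSpace ℝ (Fin d),
      (grid d k x i : ℝ) ≤ 2 ^ k * x i + 1/2 ∧ 2 ^ k * x i - 1/2 < grid d k x i := by
    intro x
    refine ⟨Int.floor_le _, ?_⟩
    have := Int.sub_one_lt_floor (2 ^ k * x i + 1/2)
    simp only [grid]
    linarith
  have h1 := key p.1.1
  have h2 := key p.2.1
  have h3 := key p.1.2
  have h4 := key p.2.2
  have hD : (Dmap d k p i : ℝ)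
      = (grid d k p.1.1 i : ℝ) + grid d k p.2.1 i - grid d k p.1.2 i - grid d k p.2.2 i := by
    simp only [Dmap, Pi.add_apply, Pi.sub_apply]
    push_cast
    ring
  have hS : (p.1.1 + p.2.1 - (p.1.2 + p.2.2)) i = p.1.1 i + p.2.1 i - (p.1.2 i + p.2.2 i) := by
    simp [PiLp.add_apply, PiLp.sub_apply]
  rw [hD, hS, abs_le]
  have hexp : 2 ^ k * (p.1.1 i + p.2.1 i - (p.1.2 i + p.2.2 i))
      = 2 ^ k * p.1.1 i + 2 ^ k * p.2.1 i - 2 ^ k * p.1.2 i - 2 ^ k * p.2.2 i := by ring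
  constructor <;> rw [hexp] <;>
    linarith [h1.1, h1.2, h2.1, h2.2, h3.1, h3.2, h4.1, h4.2]

lemma sqrtd_le : Real.sqrt d ≤ 2 ^ (d + 1) := by
  rw [show ((2 : ℝ) ^ (d + 1)) = Real.sqrt ((2 ^ (d + 1)) ^ 2) by
    rw [Real.sqrt_sq (by positivity)]]
  apply Real.sqrt_le_sqrt
  have h1 : (d : ℝ) ≤ 2 ^ d := by exact_mod_cast (Nat.lt_two_pow_self (n := d)).le
  have h2 : (2 : ℝ) ^ d ≤ (2 ^ (d + 1)) ^ 2 := by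
    rw [← pow_mul]
    exact pow_le_pow_right₀ (by norm_num) (by omega)
  linarith

end SEAux


/-- **Additive energy at scale `2^{-m}` is comparable to the `L²` norm of the convolution
of the discretizations**, up to multiplicative constants depending only on `d`. -/
theorem scaleEnergy_comparable_convL2Sq (d : ℕ) :
    ∃ c > (0 : ℝ), ∃ C > (0 : ℝ), ∀ (m : ℕ) (μ ν : Measure (EuclideanSpace ℝ (Fin d))),
      IsFiniteMeasure μ → IsFiniteMeasure ν →
      μ {x | ∀ i, 0 ≤ x i ∧ x i ≤ 1}ᶜ = 0 → ν {x | ∀ i, 0 ≤ x i ∧ x i ≤ 1}ᶜ = 0 →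
      c * convL2Sq d (discretization d m μ) (discretization d m ν) ≤
          scaleEnergy d (((2 : ℝ) ^ m)⁻¹) μ ν ∧
        scaleEnergy d (((2 : ℝ) ^ m)⁻¹) μ ν ≤
          C * convL2Sq d (discretization d m μ) (discretization d m ν) := by
  classical
  open SEAux in
  set K := d + 2 with hK
  set M : ℤ := 2 ^ (d + 3) + 2 with hM
  have hMpos : (0 : ℤ) ≤ M := by positivity
  set T1 : Finset (Fin d → ℤ) := Fintype.piFinset fun _ => Finset.Icc (-3 : ℤ) 3 with hT1
  set T2 : Finset (Fin d → ℤ) := Fintype.piFinset fun _ => Finset.Icc (-M) M with hT2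
  have hT1pos : 0 < T1.card := Finset.card_pos.2 ⟨0, by
    simp only [hT1, Fintype.mem_piFinset, Finset.mem_Icc, Pi.zero_apply]
    intro i; omega⟩
  have hT2pos : 0 < T2.card := Finset.card_pos.2 ⟨0, by
    simp only [hT2, Fintype.mem_piFinset, Finset.mem_Icc, Pi.zero_apply]
    intro i; omega⟩
  refine ⟨((T2.card : ℝ))⁻¹, inv_pos.2 (by exact_mod_cast hT2pos), (T1.card : ℝ), by exact_mod_cast hT1pos, ?_⟩
  intro m μ ν hμ hν _ _
  haveI := hμ; haveI := hν
  set P := (μ.prod μ).prod (ν.prod ν) with hP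
  set Eset : Set ((EuclideanSpace ℝ (Fin d) × EuclideanSpace ℝ (Fin d)) ×
      EuclideanSpace ℝ (Fin d) × EuclideanSpace ℝ (Fin d)) :=
    {p | ‖p.1.1 + p.2.1 - (p.1.2 + p.2.2)‖ ≤ ((2 : ℝ) ^ m)⁻¹} with hE
  have hE_energy : scaleEnergy d (((2 : ℝ) ^ m)⁻¹) μ ν = (P Eset).toReal := rfl
  have hconv : convL2Sq d (discretization d m μ) (discretization d m ν)
      = (P {p | Dmap d m p = (0 : Fin d → ℤ)}).toReal := convL2Sq_eq m μ ν
  -- upper bound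
  have hupper : P Eset ≤ (T1.card : ℝ≥0∞) * P {p | Dmap d m p = (0 : Fin d → ℤ)} := by
    have hincl : Eset ⊆ ⋃ t ∈ T1, {p | Dmap d m p = t} := by
      intro p hp
      simp only [hE, Set.mem_setOf_eq] at hp
      simp only [Set.mem_iUnion, Set.mem_setOf_eq]
      refine ⟨Dmap d m p, ?_, rfl⟩
      rw [hT1, Fintype.mem_piFinset]
      intro i
      rw [Finset.mem_Icc, ← abs_le]
      have h1 := Dmap_coord m p i
      have h2 : |(p.1.1 + p.2.1 - (p.1.2 + p.2.2)) i| ≤ ((2 : ℝ) ^ m)⁻¹ :=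
        le_trans (coord_le_norm _ i) hp
      have h3 : |2 ^ m * (p.1.1 + p.2.1 - (p.1.2 + p.2.2)) i| ≤ 1 := by
        rw [abs_mul, abs_of_pos (by positivity : (0 : ℝ) < 2 ^ m)]
        calc (2 : ℝ) ^ m * |(p.1.1 + p.2.1 - (p.1.2 + p.2.2)) i|
            ≤ 2 ^ m * ((2 : ℝ) ^ m)⁻¹ := by
              exact mul_le_mul_of_nonneg_left h2 (by positivity)
          _ = 1 := mul_inv_cancel₀ (by positivity)
      have h4 : |(Dmap d m p i : ℝ)| ≤ 3 := by
        have := abs_add_le ((Dmap d m p i : ℝ) - 2 ^ m * (p.1.1 + p.2.1 - (p.1.2 + p.2.2)) i)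
          (2 ^ m * (p.1.1 + p.2.1 - (p.1.2 + p.2.2)) i)
        simp only [sub_add_cancel] at this
        linarith
      exact_mod_cast h4
    calc P Eset ≤ P (⋃ t ∈ T1, {p | Dmap d m p = t}) := measure_mono hincl
      _ ≤ ∑ t ∈ T1, P {p | Dmap d m p = t} := measure_biUnion_finset_le _ _
      _ ≤ ∑ _t ∈ T1, P {p | Dmap d m p = (0 : Fin d → ℤ)} :=
          Finset.sum_le_sum fun t _ => measure_D_le m μ ν t
      _ = T1.card • P {p | Dmap d m p = (0 : Fin d → ℤ)} := Finset.sum_const _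
      _ = (T1.card : ℝ≥0∞) * P {p | Dmap d m p = (0 : Fin d → ℤ)} := nsmul_eq_mul _ _
  -- lower bound inclusions
  have hlow1 : {p | Dmap d m p = (0 : Fin d → ℤ)} ⊆ ⋃ t ∈ T2, {p | Dmap d (m + K) p = t} := by
    intro p hp
    simp only [Set.mem_setOf_eq] at hp
    simp only [Set.mem_iUnion, Set.mem_setOf_eq]
    refine ⟨Dmap d (m + K) p, ?_, rfl⟩
    rw [hT2, Fintype.mem_piFinset]
    intro i
    rw [Finset.mem_Icc, ← abs_le]
    have h1 := Dmap_coord m p i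
    rw [hp] at h1
    have h0 : ((0 : Fin d → ℤ) i : ℝ) = 0 := by simp
    rw [h0, zero_sub, abs_neg] at h1
    have h2 := Dmap_coord (m + K) p i
    have h3 : |(2 : ℝ) ^ (m + K) * (p.1.1 + p.2.1 - (p.1.2 + p.2.2)) i| ≤ 2 ^ (K + 1) := by
      have hxx : (2 : ℝ) ^ (m + K) * (p.1.1 + p.2.1 - (p.1.2 + p.2.2)) i
          = 2 ^ K * (2 ^ m * (p.1.1 + p.2.1 - (p.1.2 + p.2.2)) i) := by
        rw [pow_add]; ring
      rw [hxx, abs_mul, abs_of_pos (by positivity : (0 : ℝ) < 2 ^ K)]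
      calc (2 : ℝ) ^ K * |2 ^ m * (p.1.1 + p.2.1 - (p.1.2 + p.2.2)) i|
          ≤ 2 ^ K * 2 := mul_le_mul_of_nonneg_left h1 (by positivity)
        _ = 2 ^ (K + 1) := (pow_succ 2 K).symm
    have h4 : |(Dmap d (m + K) p i : ℝ)| ≤ 2 ^ (K + 1) + 2 := by
      have := abs_add_le
        ((Dmap d (m + K) p i : ℝ) - 2 ^ (m + K) * (p.1.1 + p.2.1 - (p.1.2 + p.2.2)) i)
        (2 ^ (m + K) * (p.1.1 + p.2.1 - (p.1.2 + p.2.2)) i)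
      simp only [sub_add_cancel] at this
      linarith
    have h5 : ((M : ℤ) : ℝ) = 2 ^ (K + 1) + 2 := by
      rw [hM, hK]
      push_cast
      norm_num
    rw [show ((K : ℕ) + 1) = d + 3 by omega] at h4
    have h6 : |(Dmap d (m + K) p i : ℝ)| ≤ ((M : ℤ) : ℝ) := by
      rw [hM]; push_cast at h4 ⊢; linarith
    exact_mod_cast h6
  have hlow2 : {p | Dmap d (m + K) p = (0 : Fin d → ℤ)} ⊆ Eset := by
    intro p hp
    simp only [Set.mem_setOf_eq] at hp
    simp only [hE, Set.mem_setOf_eq]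
    have coordb : ∀ i, |(p.1.1 + p.2.1 - (p.1.2 + p.2.2)) i| ≤ 2 * ((2 : ℝ) ^ (m + K))⁻¹ := by
      intro i
      have h1 := Dmap_coord (m + K) p i
      rw [hp] at h1
      have h0 : ((0 : Fin d → ℤ) i : ℝ) = 0 := by simp
      rw [h0, zero_sub, abs_neg, abs_mul,
        abs_of_pos (by positivity : (0 : ℝ) < 2 ^ (m + K))] at h1
      have hpos : (0 : ℝ) < 2 ^ (m + K) := by positivity
      calc |(p.1.1 + p.2.1 - (p.1.2 + p.2.2)) i|
          = (2 ^ (m + K) * |(p.1.1 + p.2.1 - (p.1.2 + p.2.2)) i|) * ((2 : ℝ) ^ (m + K))⁻¹ := by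
            field_simp
        _ ≤ 2 * ((2 : ℝ) ^ (m + K))⁻¹ := mul_le_mul_of_nonneg_right h1 (by positivity)
    have hn := norm_le_of_coord (by positivity) coordb
    refine le_trans hn ?_
    have hs := sqrtd_le (d := d)
    calc Real.sqrt d * (2 * ((2 : ℝ) ^ (m + K))⁻¹)
        ≤ 2 ^ (d + 1) * (2 * ((2 : ℝ) ^ (m + K))⁻¹) :=
          mul_le_mul_of_nonneg_right hs (by positivity)
      _ = ((2 : ℝ) ^ m)⁻¹ := by
          rw [hK]
          rw [show m + (d + 2) = (d + 2) + m by omega, pow_add]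
          field_simp
          ring
  have hlower : P {p | Dmap d m p = (0 : Fin d → ℤ)} ≤ (T2.card : ℝ≥0∞) * P Eset := by
    calc P {p | Dmap d m p = (0 : Fin d → ℤ)}
        ≤ P (⋃ t ∈ T2, {p | Dmap d (m + K) p = t}) := measure_mono hlow1
      _ ≤ ∑ t ∈ T2, P {p | Dmap d (m + K) p = t} := measure_biUnion_finset_le _ _
      _ ≤ ∑ _t ∈ T2, P {p | Dmap d (m + K) p = (0 : Fin d → ℤ)} :=
          Finset.sum_le_sum fun t _ => measure_D_le (m + K) μ ν t
      _ = T2.card • P {p | Dmap d (m + K) p = (0 : Fin d → ℤ)} := Finset.sum_const _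
      _ = (T2.card : ℝ≥0∞) * P {p | Dmap d (m + K) p = (0 : Fin d → ℤ)} := nsmul_eq_mul _ _
      _ ≤ (T2.card : ℝ≥0∞) * P Eset := mul_le_mul_right (measure_mono hlow2) _
  constructor
  · -- lower bound
    have hr := ENNReal.toReal_mono
      (ENNReal.mul_ne_top (ENNReal.natCast_ne_top _) (measure_ne_top P _)) hlower
    rw [ENNReal.toReal_mul, ENNReal.toReal_natCast] at hr
    rw [hconv, hE_energy]
    calc ((T2.card : ℝ))⁻¹ * (P {p | Dmap d m p = (0 : Fin d → ℤ)}).toReal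
        ≤ ((T2.card : ℝ))⁻¹ * ((T2.card : ℝ) * (P Eset).toReal) :=
          mul_le_mul_of_nonneg_left hr (inv_nonneg.2 (Nat.cast_nonneg _))
      _ = (P Eset).toReal := by
          rw [← mul_assoc, inv_mul_cancel₀ (by exact_mod_cast hT2pos.ne'), one_mul]
  · -- upper bound
    have hr := ENNReal.toReal_mono
      (ENNReal.mul_ne_top (ENNReal.natCast_ne_top _) (measure_ne_top P _)) hupper
    rw [ENNReal.toReal_mul, ENNReal.toReal_natCast] at hr
    rw [hconv, hE_energy]
    exact hr
end
end
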